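/- Let q ≥ 5 be an odd prime power, and let G_1 be the graph on vertex set {(x,y) : x,y ∈ F_q*} where (x1,y1) ∼ (x2,y2) iff any three of the five points e_1=(1,0,0), e_2=(0,1,0), e_3=(0,0,1), (1,x1,y1), (1,x2,y2) of PG(2,q) are non-collinear (with the two points distinct). Then G_1 is a strongly regular graph with parameters v=(q-1)^2, k=(q-2)(q-3), λ=(q-4)^2+1, μ=(q-3)(q-4). -/

import Mathlib

open Matrix
open Finset

set_option linter.unusedSectionVars false

section Aux

variable {F : Type} [Field F] [Fintype F] [DecidableEq F]

omit [Field F] in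
lemma srg2_count_notmem (B : Finset F) :
    (univ.filter fun b : F => b ∉ B).card = Fintype.card F - B.card := by
  have : (univ.filter fun b : F => b ∉ B) = Bᶜ := by ext b; simp
  rw [this, Finset.card_compl]

omit [Field F] in
lemma srg2_count_split (A : Finset F) (B : F → Finset F) :
    (univ.filter fun p : F × F => p.1 ∉ A ∧ p.2 ∉ B p.1).card
      = ∑ a ∈ Aᶜ, (Fintype.card F - (B a).card) := by
  rw [Finset.card_filter, Fintype.sum_prod_type]
  have : ∀ a : F, (∑ b : F, if a ∉ A ∧ b ∉ B a then (1:ℕ) else 0)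
      = if a ∉ A then (Fintype.card F - (B a).card) else 0 := by
    intro a
    by_cases ha : a ∈ A
    · simp [ha]
    · simp only [ha, not_false_iff, true_and, if_true]
      rw [← srg2_count_notmem (B a), Finset.card_filter]
  simp_rw [this]
  rw [← Finset.sum_filter]
  congr 1
  ext a; simp

lemma srg2_card_V_filter (P : F → F → Prop) [∀ a b, Decidable (P a b)] :
    (univ.filter fun z : {x : F // x ≠ 0} × {y : F // y ≠ 0} => P z.1.1 z.2.1).card
      = (univ.filter fun p : F × F => (p.1 ≠ 0 ∧ p.2 ≠ 0) ∧ P p.1 p.2).card := by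
  apply Finset.card_bij' (i := fun z _ => (z.1.1, z.2.1))
    (j := fun p hp => (⟨p.1, by simp at hp; exact hp.1.1⟩, ⟨p.2, by simp at hp; exact hp.1.2⟩))
  · intro z hz; rfl
  · intro p hp; rfl
  · intro z hz; simp at hz ⊢; exact ⟨⟨z.1.2, z.2.2⟩, hz⟩
  · intro p hp; simp at hp ⊢; exact hp.2

omit [Field F] [Fintype F] in
lemma srg2_card2 {a b : F} (hab : a ≠ b) : ({a,b} : Finset F).card = 2 := by
  rw [Finset.card_insert_of_notMem (by simp [hab]), Finset.card_singleton]

omit [Field F] [Fintype F] in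
lemma srg2_card3 {a b c : F} (hab : a ≠ b) (hac : a ≠ c) (hbc : b ≠ c) :
    ({a,b,c} : Finset F).card = 3 := by
  rw [Finset.card_insert_of_notMem (by simp [hab, hac]), srg2_card2 hbc]

omit [Field F] [Fintype F] in
lemma srg2_card4 {a b c d : F} (hab : a ≠ b) (hac : a ≠ c) (had : a ≠ d)
    (hbc : b ≠ c) (hbd : b ≠ d) (hcd : c ≠ d) :
    ({a,b,c,d} : Finset F).card = 4 := by
  rw [Finset.card_insert_of_notMem (by simp [hab, hac, had]), srg2_card3 hbc hbd hcd]

omit [Field F] [Fintype F] in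
lemma srg2_card5 {a b c d e : F} (hab : a ≠ b) (hac : a ≠ c) (had : a ≠ d) (hae : a ≠ e)
    (hbc : b ≠ c) (hbd : b ≠ d) (hbe : b ≠ e) (hcd : c ≠ d) (hce : c ≠ e) (hde : d ≠ e) :
    ({a,b,c,d,e} : Finset F).card = 5 := by
  rw [Finset.card_insert_of_notMem (by simp [hab, hac, had, hae]),
    srg2_card4 hbc hbd hbe hcd hce hde]

/-- slope condition -/
lemma srg2_slope {x y a b : F} (hx : x ≠ 0) : x*b = a*y ↔ b = y*x⁻¹*a := by
  rw [show y*x⁻¹*a = x⁻¹*(a*y) by ring, eq_inv_mul_iff_mul_eq₀ hx]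

/-- degree count -/
lemma srg2_deg_count (x1 y1 : F) (hx1 : x1 ≠ 0) (hy1 : y1 ≠ 0)
    (hQ : 5 ≤ Fintype.card F) :
    (univ.filter fun p : F × F => (p.1 ≠ 0 ∧ p.2 ≠ 0) ∧
        (x1 ≠ p.1 ∧ y1 ≠ p.2 ∧ x1*p.2 ≠ p.1*y1)).card
      = (Fintype.card F - 2) * (Fintype.card F - 3) := by
  have hrw : (univ.filter fun p : F × F => (p.1 ≠ 0 ∧ p.2 ≠ 0) ∧
        (x1 ≠ p.1 ∧ y1 ≠ p.2 ∧ x1*p.2 ≠ p.1*y1))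
      = univ.filter fun p : F × F =>
          p.1 ∉ ({0, x1} : Finset F) ∧ p.2 ∉ ({0, y1, y1*x1⁻¹*p.1} : Finset F) := by
    apply Finset.filter_congr
    intro p _
    simp only [Finset.mem_insert, Finset.mem_singleton, not_or]
    rw [show (x1*p.2 ≠ p.1*y1) ↔ ¬(x1*p.2 = p.1*y1) from Iff.rfl, srg2_slope hx1]
    constructor
    · rintro ⟨⟨ha, hb⟩, h1, h2, h3⟩
      exact ⟨⟨ha, fun h => h1 h.symm⟩, hb, fun h => h2 h.symm, h3⟩
    · rintro ⟨⟨ha, h1⟩, hb, h2, h3⟩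
      exact ⟨⟨ha, hb⟩, fun h => h1 h.symm, fun h => h2 h.symm, h3⟩
  rw [hrw, srg2_count_split ({0, x1} : Finset F) (fun a => {0, y1, y1*x1⁻¹*a})]
  have hsum : ∀ a ∈ ({0, x1} : Finset F)ᶜ,
      Fintype.card F - ({0, y1, y1*x1⁻¹*a} : Finset F).card = Fintype.card F - 3 := by
    intro a ha
    simp only [Finset.mem_compl, Finset.mem_insert, Finset.mem_singleton, not_or] at ha
    obtain ⟨ha0, hax1⟩ := ha
    have h1 : (0:F) ≠ y1 := fun h => hy1 h.symm
    have h2 : (0:F) ≠ y1*x1⁻¹*a := by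
      intro h
      have := (srg2_slope hx1).mpr h
      exact hy1 (by
        rcases mul_eq_zero.mp (show a*y1 = 0 by linear_combination -this) with h' | h'
        · exact absurd h' ha0
        · exact h')
    have h3 : y1 ≠ y1*x1⁻¹*a := by
      intro h
      exact hax1 (mul_right_cancel₀ hy1 ((srg2_slope hx1).mpr h)).symm
    rw [srg2_card3 h1 h2 h3]
  rw [Finset.sum_congr rfl hsum, Finset.sum_const, Finset.card_compl,
    srg2_card2 (fun h : (0:F) = x1 => hx1 h.symm)]
  simp [mul_comm]


lemma srg2_s_ne_zero {x y a : F} (hx : x ≠ 0) (hy : y ≠ 0) (ha : a ≠ 0) :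
    (0:F) ≠ y*x⁻¹*a :=
  (mul_ne_zero (mul_ne_zero hy (inv_ne_zero hx)) ha).symm

lemma srg2_s_ne_self {x y a : F} (hx : x ≠ 0) (hy : y ≠ 0) (hax : a ≠ x) :
    y ≠ y*x⁻¹*a :=
  fun h => hax (mul_right_cancel₀ hy ((srg2_slope hx).mpr h)).symm

lemma srg2_s_eq_iff {x1 y1 y2 a : F} (hx1 : x1 ≠ 0) (hy1 : y1 ≠ 0) :
    y2 = y1*x1⁻¹*a ↔ a = x1*y2*y1⁻¹ := by
  rw [← srg2_slope hx1, eq_mul_inv_iff_mul_eq₀ hy1]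
  constructor <;> intro h <;> linear_combination -h

lemma srg2_s_ne_s {x1 y1 x2 y2 a : F} (hx1 : x1 ≠ 0) (hx2 : x2 ≠ 0) (ha : a ≠ 0)
    (h3 : x1*y2 ≠ x2*y1) : y1*x1⁻¹*a ≠ y2*x2⁻¹*a := by
  intro h
  apply h3
  have h' := mul_right_cancel₀ ha h
  field_simp at h'
  linear_combination -h'

lemma srg2_inner (x1 y1 x2 y2 a : F) (hx1 : x1 ≠ 0) (hy1 : y1 ≠ 0) (hx2 : x2 ≠ 0)
    (hy2 : y2 ≠ 0) (h2 : y1 ≠ y2) (h3 : x1*y2 ≠ x2*y1) (hQ : 5 ≤ Fintype.card F)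
    (ha0 : a ≠ 0) (hax1 : a ≠ x1) (hax2 : a ≠ x2) :
    Fintype.card F - ({0, y1, y2, y1*x1⁻¹*a, y2*x2⁻¹*a} : Finset F).card
      = (Fintype.card F - 5)
        + ((if a = x1*y2*y1⁻¹ then 1 else 0) + (if a = x2*y1*y2⁻¹ then 1 else 0)) := by
  have f01 : (0:F) ≠ y1 := Ne.symm hy1
  have f02 : (0:F) ≠ y2 := Ne.symm hy2
  have f0s1 : (0:F) ≠ y1*x1⁻¹*a := srg2_s_ne_zero hx1 hy1 ha0
  have f0s2 : (0:F) ≠ y2*x2⁻¹*a := srg2_s_ne_zero hx2 hy2 ha0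
  have f1s1 : y1 ≠ y1*x1⁻¹*a := srg2_s_ne_self hx1 hy1 hax1
  have f2s2 : y2 ≠ y2*x2⁻¹*a := srg2_s_ne_self hx2 hy2 hax2
  have e1 : y2 = y1*x1⁻¹*a ↔ a = x1*y2*y1⁻¹ := srg2_s_eq_iff hx1 hy1
  have e2 : y1 = y2*x2⁻¹*a ↔ a = x2*y1*y2⁻¹ := srg2_s_eq_iff hx2 hy2
  have f5 : y1*x1⁻¹*a ≠ y2*x2⁻¹*a := srg2_s_ne_s hx1 hx2 ha0 h3
  by_cases hp : a = x1*y2*y1⁻¹ <;> by_cases hr : a = x2*y1*y2⁻¹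
  · rw [(e1.mpr hp).symm, (e2.mpr hr).symm,
      show ({0,y1,y2,y2,y1} : Finset F) = {0,y1,y2} by ext x; simp; try tauto,
      srg2_card3 f01 f02 h2, if_pos hp, if_pos hr]
    omega
  · rw [(e1.mpr hp).symm,
      show ({0,y1,y2,y2,y2*x2⁻¹*a} : Finset F) = {0,y1,y2,y2*x2⁻¹*a} by ext x; simp; try tauto,
      srg2_card4 f01 f02 f0s2 h2 (fun h => hr (e2.mp h)) f2s2, if_pos hp, if_neg hr]
    omega
  · rw [(e2.mpr hr).symm,
      show ({0,y1,y2,y1*x1⁻¹*a,y1} : Finset F) = {0,y1,y2,y1*x1⁻¹*a} by ext x; simp; try tauto,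
      srg2_card4 f01 f02 f0s1 h2 f1s1 (fun h => hp (e1.mp h)), if_neg hp, if_pos hr]
    omega
  · rw [srg2_card5 f01 f02 f0s1 f0s2 h2 f1s1 (fun h => hr (e2.mp h))
      (fun h => hp (e1.mp h)) f2s2 f5, if_neg hp, if_neg hr]
    omega

lemma srg2_pred_iff (x1 y1 x2 y2 : F) (hx1 : x1 ≠ 0) (hx2 : x2 ≠ 0) (p : F × F) :
    ((p.1 ≠ 0 ∧ p.2 ≠ 0) ∧ (x1 ≠ p.1 ∧ y1 ≠ p.2 ∧ x1*p.2 ≠ p.1*y1)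
        ∧ (x2 ≠ p.1 ∧ y2 ≠ p.2 ∧ x2*p.2 ≠ p.1*y2))
      ↔ (p.1 ∉ ({0, x1, x2} : Finset F)
          ∧ p.2 ∉ ({0, y1, y2, y1*x1⁻¹*p.1, y2*x2⁻¹*p.1} : Finset F)) := by
  simp only [Finset.mem_insert, Finset.mem_singleton, not_or]
  constructor
  · rintro ⟨⟨ha, hb⟩, ⟨g1, g2, g3⟩, g4, g5, g6⟩
    exact ⟨⟨ha, fun h => g1 h.symm, fun h => g4 h.symm⟩,
      hb, fun h => g2 h.symm, fun h => g5 h.symm,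
      fun h => g3 ((srg2_slope hx1).mpr h),
      fun h => g6 ((srg2_slope hx2).mpr h)⟩
  · rintro ⟨⟨ha, g1, g4⟩, hb, g2, g5, g3, g6⟩
    exact ⟨⟨ha, hb⟩, ⟨fun h => g1 h.symm, fun h => g2 h.symm,
      fun h => g3 ((srg2_slope hx1).mp h)⟩,
      fun h => g4 h.symm, fun h => g5 h.symm,
      fun h => g6 ((srg2_slope hx2).mp h)⟩

lemma srg2_p_notmem (x1 y1 x2 y2 : F) (hx1 : x1 ≠ 0) (hy1 : y1 ≠ 0) (hx2 : x2 ≠ 0)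
    (hy2 : y2 ≠ 0) (h2 : y1 ≠ y2) (h3 : x1*y2 ≠ x2*y1) :
    x1*y2*y1⁻¹ ∉ ({0, x1, x2} : Finset F) := by
  simp only [Finset.mem_insert, Finset.mem_singleton, not_or]
  refine ⟨mul_ne_zero (mul_ne_zero hx1 hy2) (inv_ne_zero hy1), ?_, ?_⟩
  · intro h
    rw [mul_inv_eq_iff_eq_mul₀ hy1] at h
    exact h2 (mul_left_cancel₀ hx1 (by linear_combination h)).symm
  · intro h
    rw [mul_inv_eq_iff_eq_mul₀ hy1] at h
    exact h3 h

lemma srg2_lambda_count (x1 y1 x2 y2 : F) (hx1 : x1 ≠ 0) (hy1 : y1 ≠ 0) (hx2 : x2 ≠ 0)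
    (hy2 : y2 ≠ 0) (h1 : x1 ≠ x2) (h2 : y1 ≠ y2) (h3 : x1*y2 ≠ x2*y1)
    (hQ : 5 ≤ Fintype.card F) :
    (univ.filter fun p : F × F => (p.1 ≠ 0 ∧ p.2 ≠ 0)
        ∧ (x1 ≠ p.1 ∧ y1 ≠ p.2 ∧ x1*p.2 ≠ p.1*y1)
        ∧ (x2 ≠ p.1 ∧ y2 ≠ p.2 ∧ x2*p.2 ≠ p.1*y2)).card
      = (Fintype.card F - 4)^2 + 1 := by
  rw [Finset.filter_congr (fun p _ => srg2_pred_iff x1 y1 x2 y2 hx1 hx2 p),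
    srg2_count_split ({0,x1,x2} : Finset F) (fun a => {0,y1,y2,y1*x1⁻¹*a,y2*x2⁻¹*a})]
  have hsum : ∀ a ∈ ({0,x1,x2} : Finset F)ᶜ,
      Fintype.card F - ({0,y1,y2,y1*x1⁻¹*a,y2*x2⁻¹*a} : Finset F).card
        = (Fintype.card F - 5)
          + ((if a = x1*y2*y1⁻¹ then 1 else 0) + (if a = x2*y1*y2⁻¹ then 1 else 0)) := by
    intro a ha
    simp only [Finset.mem_compl, Finset.mem_insert, Finset.mem_singleton, not_or] at ha
    exact srg2_inner x1 y1 x2 y2 a hx1 hy1 hx2 hy2 h2 h3 hQ ha.1 ha.2.1 ha.2.2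
  rw [Finset.sum_congr rfl hsum, Finset.sum_add_distrib, Finset.sum_add_distrib,
    Finset.sum_const, Finset.sum_ite_eq', Finset.sum_ite_eq',
    if_pos (Finset.mem_compl.mpr (srg2_p_notmem x1 y1 x2 y2 hx1 hy1 hx2 hy2 h2 h3)),
    if_pos (Finset.mem_compl.mpr (by
      have h' := srg2_p_notmem x2 y2 x1 y1 hx2 hy2 hx1 hy1 h2.symm
        (fun h => h3 (by linear_combination -h))
      simp only [Finset.mem_insert, Finset.mem_singleton, not_or] at h' ⊢
      exact ⟨h'.1, h'.2.2, h'.2.1⟩))]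
  have hA : ({0,x1,x2} : Finset F)ᶜ.card = Fintype.card F - 3 := by
    rw [Finset.card_compl, srg2_card3 (Ne.symm hx1) (Ne.symm hx2) h1]
  rw [hA]
  obtain ⟨t, ht⟩ : ∃ t, Fintype.card F = t + 5 := ⟨Fintype.card F - 5, by omega⟩
  rw [ht, show t+5-3 = t+2 by omega, show t+5-5 = t by omega, show t+5-4 = t+1 by omega]
  ring

lemma srg2_mu1_count (x y1 y2 : F) (hx : x ≠ 0) (hy1 : y1 ≠ 0) (hy2 : y2 ≠ 0)
    (h2 : y1 ≠ y2) (hQ : 5 ≤ Fintype.card F) :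
    (univ.filter fun p : F × F => (p.1 ≠ 0 ∧ p.2 ≠ 0)
        ∧ (x ≠ p.1 ∧ y1 ≠ p.2 ∧ x*p.2 ≠ p.1*y1)
        ∧ (x ≠ p.1 ∧ y2 ≠ p.2 ∧ x*p.2 ≠ p.1*y2)).card
      = (Fintype.card F - 3) * (Fintype.card F - 4) := by
  have h3 : x*y2 ≠ x*y1 := fun h => h2 (mul_left_cancel₀ hx h).symm
  rw [Finset.filter_congr (fun p _ => srg2_pred_iff x y1 x y2 hx hx p),
    srg2_count_split ({0,x,x} : Finset F) (fun a => {0,y1,y2,y1*x⁻¹*a,y2*x⁻¹*a})]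
  have hsum : ∀ a ∈ ({0,x,x} : Finset F)ᶜ,
      Fintype.card F - ({0,y1,y2,y1*x⁻¹*a,y2*x⁻¹*a} : Finset F).card
        = (Fintype.card F - 5)
          + ((if a = x*y2*y1⁻¹ then 1 else 0) + (if a = x*y1*y2⁻¹ then 1 else 0)) := by
    intro a ha
    simp only [Finset.mem_compl, Finset.mem_insert, Finset.mem_singleton, not_or] at ha
    exact srg2_inner x y1 x y2 a hx hy1 hx hy2 h2 h3 hQ ha.1 ha.2.1 ha.2.2
  rw [Finset.sum_congr rfl hsum, Finset.sum_add_distrib, Finset.sum_add_distrib,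
    Finset.sum_const, Finset.sum_ite_eq', Finset.sum_ite_eq',
    if_pos (Finset.mem_compl.mpr (srg2_p_notmem x y1 x y2 hx hy1 hx hy2 h2 h3)),
    if_pos (Finset.mem_compl.mpr (by
      have h' := srg2_p_notmem x y2 x y1 hx hy2 hx hy1 h2.symm
        (fun h => h3 (by linear_combination -h))
      simp only [Finset.mem_insert, Finset.mem_singleton, not_or] at h' ⊢
      exact ⟨h'.1, h'.2.2, h'.2.1⟩))]
  have hA : ({0,x,x} : Finset F)ᶜ.card = Fintype.card F - 2 := by
    rw [show ({0,x,x} : Finset F) = {0,x} by ext b; simp,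
      Finset.card_compl, srg2_card2 (Ne.symm hx)]
  rw [hA]
  obtain ⟨t, ht⟩ : ∃ t, Fintype.card F = t + 5 := ⟨Fintype.card F - 5, by omega⟩
  rw [ht, show t+5-2 = t+3 by omega, show t+5-5 = t by omega, show t+5-3 = t+2 by omega,
    show t+5-4 = t+1 by omega]
  ring

lemma srg2_mu2_count (x1 x2 y : F) (hx1 : x1 ≠ 0) (hx2 : x2 ≠ 0) (hy : y ≠ 0)
    (h1 : x1 ≠ x2) (hQ : 5 ≤ Fintype.card F) :
    (univ.filter fun p : F × F => (p.1 ≠ 0 ∧ p.2 ≠ 0)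
        ∧ (x1 ≠ p.1 ∧ y ≠ p.2 ∧ x1*p.2 ≠ p.1*y)
        ∧ (x2 ≠ p.1 ∧ y ≠ p.2 ∧ x2*p.2 ≠ p.1*y)).card
      = (Fintype.card F - 3) * (Fintype.card F - 4) := by
  rw [Finset.filter_congr (fun p _ => srg2_pred_iff x1 y x2 y hx1 hx2 p),
    srg2_count_split ({0,x1,x2} : Finset F) (fun a => {0,y,y,y*x1⁻¹*a,y*x2⁻¹*a})]
  have hsum : ∀ a ∈ ({0,x1,x2} : Finset F)ᶜ,
      Fintype.card F - ({0,y,y,y*x1⁻¹*a,y*x2⁻¹*a} : Finset F).card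
        = Fintype.card F - 4 := by
    intro a ha
    simp only [Finset.mem_compl, Finset.mem_insert, Finset.mem_singleton, not_or] at ha
    obtain ⟨ha0, hax1, hax2⟩ := ha
    rw [show ({0,y,y,y*x1⁻¹*a,y*x2⁻¹*a} : Finset F) = {0,y,y*x1⁻¹*a,y*x2⁻¹*a} by
        ext b; simp; try tauto,
      srg2_card4 (Ne.symm hy) (srg2_s_ne_zero hx1 hy ha0) (srg2_s_ne_zero hx2 hy ha0)
        (srg2_s_ne_self hx1 hy hax1) (srg2_s_ne_self hx2 hy hax2)
        (srg2_s_ne_s hx1 hx2 ha0 (fun h => h1 (mul_right_cancel₀ hy h)))]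
  rw [Finset.sum_congr rfl hsum, Finset.sum_const, Finset.card_compl,
    srg2_card3 (Ne.symm hx1) (Ne.symm hx2) h1, smul_eq_mul]

lemma srg2_mu3_count (x1 y1 x2 y2 : F) (hx1 : x1 ≠ 0) (hy1 : y1 ≠ 0) (hx2 : x2 ≠ 0)
    (hy2 : y2 ≠ 0) (h1 : x1 ≠ x2) (h2 : y1 ≠ y2) (hcross : x1*y2 = x2*y1)
    (hQ : 5 ≤ Fintype.card F) :
    (univ.filter fun p : F × F => (p.1 ≠ 0 ∧ p.2 ≠ 0)
        ∧ (x1 ≠ p.1 ∧ y1 ≠ p.2 ∧ x1*p.2 ≠ p.1*y1)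
        ∧ (x2 ≠ p.1 ∧ y2 ≠ p.2 ∧ x2*p.2 ≠ p.1*y2)).card
      = (Fintype.card F - 3) * (Fintype.card F - 4) := by
  rw [Finset.filter_congr (fun p _ => srg2_pred_iff x1 y1 x2 y2 hx1 hx2 p),
    srg2_count_split ({0,x1,x2} : Finset F) (fun a => {0,y1,y2,y1*x1⁻¹*a,y2*x2⁻¹*a})]
  have hsum : ∀ a ∈ ({0,x1,x2} : Finset F)ᶜ,
      Fintype.card F - ({0,y1,y2,y1*x1⁻¹*a,y2*x2⁻¹*a} : Finset F).card
        = Fintype.card F - 4 := by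
    intro a ha
    simp only [Finset.mem_compl, Finset.mem_insert, Finset.mem_singleton, not_or] at ha
    obtain ⟨ha0, hax1, hax2⟩ := ha
    have e : y2*x2⁻¹*a = y1*x1⁻¹*a := by
      field_simp
      linear_combination hcross
    have hy2s : y2 ≠ y1*x1⁻¹*a := by
      intro h
      apply hax2
      have h' := (srg2_s_eq_iff hx1 hy1).mp h
      rw [h', mul_inv_eq_iff_eq_mul₀ hy1]
      linear_combination hcross
    rw [e, show ({0,y1,y2,y1*x1⁻¹*a,y1*x1⁻¹*a} : Finset F) = {0,y1,y2,y1*x1⁻¹*a} by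
        ext b; simp; try tauto,
      srg2_card4 (Ne.symm hy1) (Ne.symm hy2) (srg2_s_ne_zero hx1 hy1 ha0) h2
        (srg2_s_ne_self hx1 hy1 hax1) hy2s]
  rw [Finset.sum_congr rfl hsum, Finset.sum_const, Finset.card_compl,
    srg2_card3 (Ne.symm hx1) (Ne.symm hx2) h1, smul_eq_mul]

set_option maxHeartbeats 1000000 in
lemma det_equiv (x1 y1 x2 y2 : F) (hx1 : x1≠0) (hy1 : y1≠0) (hx2 : x2≠0) (hy2 : y2≠0)
    (h1 : x1 ≠ x2) (h2 : y1 ≠ y2) (h3 : x1*y2 ≠ x2*y1) :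
    (∀ i j k : Fin 5, i ≠ j → i ≠ k → j ≠ k →
      (Matrix.of
        ![(![![(1:F),0,0], ![0,1,0], ![0,0,1], ![1,x1,y1], ![1,x2,y2]]) i,
          (![![(1:F),0,0], ![0,1,0], ![0,0,1], ![1,x1,y1], ![1,x2,y2]]) j,
          (![![(1:F),0,0], ![0,1,0], ![0,0,1], ![1,x1,y1], ![1,x2,y2]]) k]).det ≠ 0) := by
  intro i j k hij hik hjk
  have h1' := sub_ne_zero_of_ne h1
  have h2' := sub_ne_zero_of_ne h2
  have h3' := sub_ne_zero_of_ne h3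
  fin_cases i <;> fin_cases j <;> fin_cases k <;>
    first
    | exact absurd rfl hij | exact absurd rfl hik | exact absurd rfl hjk
    | (simp only [Matrix.det_fin_three, Matrix.of_apply]
       simp
       done)
    | (simp only [Matrix.det_fin_three, Matrix.of_apply]
       simp
       intro h
       first
        | exact h1' (by linear_combination h)
        | exact h2' (by linear_combination h)
        | exact h3' (by linear_combination h)
        | exact hx1 (by linear_combination h)
        | exact hy1 (by linear_combination h)
        | exact hx2 (by linear_combination h)
        | exact hy2 (by linear_combination h)
        | exact h1' (by linear_combination -h)
        | exact h2' (by linear_combination -h)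
        | exact h3' (by linear_combination -h)
        | exact hx1 (by linear_combination -h)
        | exact hy1 (by linear_combination -h)
        | exact hx2 (by linear_combination -h)
        | exact hy2 (by linear_combination -h))

lemma det_equiv_rev (x1 y1 x2 y2 : F)
    (h : ∀ i j k : Fin 5, i ≠ j → i ≠ k → j ≠ k →
      (Matrix.of
        ![(![![(1:F),0,0], ![0,1,0], ![0,0,1], ![1,x1,y1], ![1,x2,y2]]) i,
          (![![(1:F),0,0], ![0,1,0], ![0,0,1], ![1,x1,y1], ![1,x2,y2]]) j,
          (![![(1:F),0,0], ![0,1,0], ![0,0,1], ![1,x1,y1], ![1,x2,y2]]) k]).det ≠ 0) :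
    x1 ≠ x2 ∧ y1 ≠ y2 ∧ x1*y2 ≠ x2*y1 := by
  have d1 := h 0 3 4 (by decide) (by decide) (by decide)
  have d2 := h 1 3 4 (by decide) (by decide) (by decide)
  have d3 := h 2 3 4 (by decide) (by decide) (by decide)
  simp only [Matrix.det_fin_three, Matrix.of_apply] at d1 d2 d3
  simp at d1 d2 d3
  refine ⟨?_, ?_, ?_⟩
  · intro h'; exact d3 (by rw [h']; ring_nf)
  · intro h'; exact d2 (by rw [h']; ring_nf)
  · intro h'; exact d1 (by linear_combination h')

end Aux

lemma srg2_common_card {V : Type} [Fintype V] [DecidableEq V] (G : SimpleGraph V)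
    [DecidableRel G.Adj] (v w : V) :
    Fintype.card (G.commonNeighbors v w)
      = (univ.filter fun z => G.Adj v z ∧ G.Adj w z).card := by
  rw [← Set.toFinset_card]
  congr 1
  ext z
  simp [SimpleGraph.mem_commonNeighbors]


/-- The graph G₁ on pairs (x,y) ∈ F_q* × F_q*, with (x₁,y₁) ~ (x₂,y₂) iff the two
points are distinct and any three of e₁,e₂,e₃,(1,x₁,y₁),(1,x₂,y₂) are non-collinear,
is strongly regular with parameters ((q-1)², (q-2)(q-3), (q-4)²+1, (q-3)(q-4)). -/
theorem stmt_2 (F : Type) [Field F] [Fintype F] [DecidableEq F] (q : ℕ)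
    (hq : Fintype.card F = q) (hodd : Odd q) (hq5 : 5 ≤ q) :
    ∃ (G : SimpleGraph ({x : F // x ≠ 0} × {y : F // y ≠ 0})) (_ : DecidableRel G.Adj),
      (∀ u w : {x : F // x ≠ 0} × {y : F // y ≠ 0},
        G.Adj u w ↔ (u ≠ w ∧ ∀ i j k : Fin 5, i ≠ j → i ≠ k → j ≠ k →
          (Matrix.of
            ![(![![(1:F),0,0], ![0,1,0], ![0,0,1], ![1,u.1.1,u.2.1], ![1,w.1.1,w.2.1]]) i,
              (![![(1:F),0,0], ![0,1,0], ![0,0,1], ![1,u.1.1,u.2.1], ![1,w.1.1,w.2.1]]) j,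
              (![![(1:F),0,0], ![0,1,0], ![0,0,1], ![1,u.1.1,u.2.1], ![1,w.1.1,w.2.1]]) k]).det ≠ 0)) ∧
      G.IsSRGWith ((q - 1) ^ 2) ((q - 2) * (q - 3)) ((q - 4) ^ 2 + 1) ((q - 3) * (q - 4)) := by
  subst hq
  refine ⟨⟨fun u w => u.1.1 ≠ w.1.1 ∧ u.2.1 ≠ w.2.1 ∧ u.1.1*w.2.1 ≠ w.1.1*u.2.1,
      ⟨fun u w h => ⟨h.1.symm, h.2.1.symm, fun he => h.2.2 he.symm⟩⟩,
      ⟨fun u h => h.1 rfl⟩⟩,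
    fun u w => instDecidableAnd, ?_, ?_, ?_, ?_, ?_⟩
  · -- adjacency iff determinant condition
    intro u w
    constructor
    · rintro ⟨h1, h2, h3⟩
      exact ⟨fun he => h1 (by rw [he]),
        det_equiv u.1.1 u.2.1 w.1.1 w.2.1 u.1.2 u.2.2 w.1.2 w.2.2 h1 h2 h3⟩
    · rintro ⟨hne, hdet⟩
      exact det_equiv_rev u.1.1 u.2.1 w.1.1 w.2.1 hdet
  · -- card
    have hsub : Fintype.card {x : F // x ≠ 0} = Fintype.card F - 1 := by
      rw [Fintype.card_subtype,
        show (univ.filter fun x : F => x ≠ 0) = ({0} : Finset F)ᶜ by ext b; simp,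
        Finset.card_compl, Finset.card_singleton]
    rw [Fintype.card_prod, hsub, pow_two]
  · -- regular
    intro v
    rw [SimpleGraph.degree, SimpleGraph.neighborFinset_eq_filter,
      Finset.filter_congr (fun z _ => (Iff.rfl :
        _ ↔ (v.1.1 ≠ z.1.1 ∧ v.2.1 ≠ z.2.1 ∧ v.1.1*z.2.1 ≠ z.1.1*v.2.1))),
      srg2_card_V_filter (fun a b => v.1.1 ≠ a ∧ v.2.1 ≠ b ∧ v.1.1*b ≠ a*v.2.1),
      srg2_deg_count v.1.1 v.2.1 v.1.2 v.2.2 hq5]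
  · -- lambda
    intro v w hadj
    obtain ⟨h1, h2, h3⟩ := hadj
    rw [srg2_common_card,
      Finset.filter_congr (fun z _ => (Iff.rfl :
        _ ↔ ((v.1.1 ≠ z.1.1 ∧ v.2.1 ≠ z.2.1 ∧ v.1.1*z.2.1 ≠ z.1.1*v.2.1)
          ∧ (w.1.1 ≠ z.1.1 ∧ w.2.1 ≠ z.2.1 ∧ w.1.1*z.2.1 ≠ z.1.1*w.2.1)))),
      srg2_card_V_filter (fun a b => (v.1.1 ≠ a ∧ v.2.1 ≠ b ∧ v.1.1*b ≠ a*v.2.1)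
        ∧ (w.1.1 ≠ a ∧ w.2.1 ≠ b ∧ w.1.1*b ≠ a*w.2.1)),
      srg2_lambda_count v.1.1 v.2.1 w.1.1 w.2.1 v.1.2 v.2.2 w.1.2 w.2.2 h1 h2 h3 hq5]
  · -- mu
    intro v w hne hnadj
    rw [srg2_common_card,
      Finset.filter_congr (fun z _ => (Iff.rfl :
        _ ↔ ((v.1.1 ≠ z.1.1 ∧ v.2.1 ≠ z.2.1 ∧ v.1.1*z.2.1 ≠ z.1.1*v.2.1)
          ∧ (w.1.1 ≠ z.1.1 ∧ w.2.1 ≠ z.2.1 ∧ w.1.1*z.2.1 ≠ z.1.1*w.2.1)))),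
      srg2_card_V_filter (fun a b => (v.1.1 ≠ a ∧ v.2.1 ≠ b ∧ v.1.1*b ≠ a*v.2.1)
        ∧ (w.1.1 ≠ a ∧ w.2.1 ≠ b ∧ w.1.1*b ≠ a*w.2.1))]
    by_cases hxx : (v.1.1 : F) = w.1.1
    · have hyy : (v.2.1 : F) ≠ w.2.1 := by
        intro h
        exact hne (Prod.ext (Subtype.ext hxx) (Subtype.ext h))
      simp only [hxx.symm]
      rw [srg2_mu1_count v.1.1 v.2.1 w.2.1 v.1.2 v.2.2 w.2.2 hyy hq5]
    · by_cases hyy : (v.2.1 : F) = w.2.1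
      · simp only [hyy.symm]
        rw [srg2_mu2_count v.1.1 w.1.1 v.2.1 v.1.2 w.1.2 v.2.2 hxx hq5]
      · have hcross : v.1.1*w.2.1 = w.1.1*v.2.1 := by
          by_contra hc
          exact hnadj ⟨hxx, hyy, hc⟩
        rw [srg2_mu3_count v.1.1 v.2.1 w.1.1 w.2.1 v.1.2 v.2.2 w.1.2 w.2.2
          hxx hyy hcross hq5]
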